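/- Let Π = {t_0 < ... < t_{2^m}} and Π' = {s_0 < ... < s_{2^{m'}}} be partitions of [a,b] and [c,d], and let F : [a,b] × [c,d] → ℝ with ‖F‖_{2;q} < ∞ for some q ≥ 1. Then Σ_{i=1}^{2^m} Σ_{j=1}^{2^{m'}} |Δ_iΔ_j F(t_i,s_j)| ≤ 4 · 2^{m+m'} · ‖F‖_{2;q} / 2^{m'/q}. -/

import Mathlib

open Set

noncomputable section

/-- Rectangular increment of a two-variable function. -/
def rect (H : ℝ → ℝ → ℝ) (x x' y y' : ℝ) : ℝ :=
  H x' y' - H x y' - H x' y + H x y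

/-- `t` is a (monotone) partition of `[a,b]`. -/
def IsPartition {n : ℕ} (a b : ℝ) (t : Fin (n + 1) → ℝ) : Prop :=
  Monotone t ∧ t 0 = a ∧ t (Fin.last n) = b

/-- The set of `p`-variation sums of `f` over partitions of `[a,b]`. -/
def pVarSet (p a b : ℝ) (f : ℝ → ℝ) : Set ℝ :=
  {v | ∃ (n : ℕ) (t : Fin (n + 1) → ℝ), IsPartition a b t ∧
        v = ∑ i : Fin n, |f (t i.succ) - f (t i.castSucc)| ^ p}

/-- The `p`-variation seminorm `‖f‖_{[a,b],p}`. -/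
def pVarNorm (p a b : ℝ) (f : ℝ → ℝ) : ℝ :=
  sSup (pVarSet p a b f) ^ (1 / p)

def biVar1Set (p a b c d : ℝ) (F : ℝ → ℝ → ℝ) : Set ℝ :=
  {v | ∃ y₁ ∈ Icc c d, ∃ y₂ ∈ Icc c d, v = pVarNorm p a b (fun x => F x y₁ - F x y₂)}

/-- The first bivariation seminorm `‖F‖_{1;p}`. -/
def biVar1 (p a b c d : ℝ) (F : ℝ → ℝ → ℝ) : ℝ := sSup (biVar1Set p a b c d F)

def biVar2Set (q a b c d : ℝ) (F : ℝ → ℝ → ℝ) : Set ℝ :=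
  {v | ∃ x₁ ∈ Icc a b, ∃ x₂ ∈ Icc a b, v = pVarNorm q c d (fun y => F x₁ y - F x₂ y)}

/-- The second bivariation seminorm `‖F‖_{2;q}`. -/
def biVar2 (q a b c d : ℝ) (F : ℝ → ℝ → ℝ) : ℝ := sSup (biVar2Set q a b c d F)

/-- `‖F‖_{1;p} < ∞`: all the suprema involved are finite. -/
def FiniteBiVar1 (p a b c d : ℝ) (F : ℝ → ℝ → ℝ) : Prop :=
  (∀ y₁ ∈ Icc c d, ∀ y₂ ∈ Icc c d,
      BddAbove (pVarSet p a b (fun x => F x y₁ - F x y₂))) ∧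
  BddAbove (biVar1Set p a b c d F)

/-- `‖F‖_{2;q} < ∞`: all the suprema involved are finite. -/
def FiniteBiVar2 (q a b c d : ℝ) (F : ℝ → ℝ → ℝ) : Prop :=
  (∀ x₁ ∈ Icc a b, ∀ x₂ ∈ Icc a b,
      BddAbove (pVarSet q c d (fun y => F x₁ y - F x₂ y))) ∧
  BddAbove (biVar2Set q a b c d F)

lemma holder_sum_aux {n : ℕ} (q : ℝ) (hq : 1 ≤ q) (x : Fin n → ℝ) (hx : ∀ j, 0 ≤ x j) :
    ∑ j, x j ≤ (n : ℝ) ^ ((1:ℝ) - 1/q) * (∑ j, x j ^ q) ^ (1/q) := by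
  have hq0 : 0 < q := lt_of_lt_of_le one_pos hq
  have hxq : (0:ℝ) ≤ ∑ j, x j ^ q :=
    Finset.sum_nonneg fun j _ => Real.rpow_nonneg (hx j) q
  rcases Nat.eq_zero_or_pos n with hn | hn
  · subst hn
    simp only [Finset.univ_eq_empty, Finset.sum_empty]
    positivity
  have hn0 : (0:ℝ) < n := by exact_mod_cast hn
  have key : (n:ℝ)⁻¹ * ∑ j, x j ≤ ((n:ℝ)⁻¹ * ∑ j, x j ^ q) ^ (1/q) := by
    have h := Real.arith_mean_le_rpow_mean Finset.univ (fun _ : Fin n => (n:ℝ)⁻¹) x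
      (fun i _ => by positivity) (by simp; field_simp) (fun i _ => hx i) hq
    simpa [← Finset.mul_sum] using h
  have hsplit : ((n:ℝ)⁻¹ * ∑ j, x j ^ q) ^ (1/q)
      = ((n:ℝ) ^ (1/q))⁻¹ * (∑ j, x j ^ q) ^ (1/q) := by
    rw [Real.mul_rpow (by positivity) hxq, Real.inv_rpow hn0.le]
  rw [hsplit] at key
  have h2 := mul_le_mul_of_nonneg_left key hn0.le
  rw [← mul_assoc, mul_inv_cancel₀ hn0.ne', one_mul] at h2
  calc ∑ j, x j ≤ (n:ℝ) * (((n:ℝ) ^ (1/q:ℝ))⁻¹ * (∑ j, x j ^ q) ^ (1/q)) := h2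
    _ = (n:ℝ) ^ ((1:ℝ) - 1/q) * (∑ j, x j ^ q) ^ (1/q) := by
        rw [Real.rpow_sub hn0, Real.rpow_one]; ring

/-- bound for the sum of absolute rectangular increments of `F`
over a `2^m × 2^{m'}` grid in terms of `‖F‖_{2;q}`. -/
theorem sum_abs_rect_le_biVar2
    (a b c d q : ℝ) (hq : 1 ≤ q)
    (F : ℝ → ℝ → ℝ) (hF2 : FiniteBiVar2 q a b c d F)
    (m m' : ℕ) (t : Fin (2 ^ m + 1) → ℝ) (s : Fin (2 ^ m' + 1) → ℝ)
    (ht : IsPartition a b t) (hs : IsPartition c d s) :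
    ∑ i : Fin (2 ^ m), ∑ j : Fin (2 ^ m'),
        |rect F (t i.castSucc) (t i.succ) (s j.castSucc) (s j.succ)|
      ≤ 4 * 2 ^ (m + m') * biVar2 q a b c d F / (2 : ℝ) ^ ((m' : ℝ) / q) := by
  have hq0 : 0 < q := lt_of_lt_of_le one_pos hq
  set B := biVar2 q a b c d F with hB
  set D : ℝ := (2 : ℝ) ^ ((m' : ℝ) / q) with hD
  have hDpos : 0 < D := Real.rpow_pos_of_pos two_pos _
  -- per-row bound
  have main : ∀ i : Fin (2 ^ m), 0 ≤ B ∧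
      ∑ j : Fin (2 ^ m'),
        |rect F (t i.castSucc) (t i.succ) (s j.castSucc) (s j.succ)|
      ≤ ((2:ℝ) ^ m') ^ ((1:ℝ) - 1/q) * B := by
    intro i
    set x₁ := t i.succ
    set x₂ := t i.castSucc
    have hx₁ : x₁ ∈ Icc a b :=
      ⟨by rw [← ht.2.1]; exact ht.1 (Fin.zero_le _),
       by rw [← ht.2.2]; exact ht.1 (Fin.le_last _)⟩
    have hx₂ : x₂ ∈ Icc a b :=
      ⟨by rw [← ht.2.1]; exact ht.1 (Fin.zero_le _),
       by rw [← ht.2.2]; exact ht.1 (Fin.le_last _)⟩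
    set h : ℝ → ℝ := fun y => F x₁ y - F x₂ y with hh
    have hrect : ∀ j : Fin (2 ^ m'),
        rect F x₂ x₁ (s j.castSucc) (s j.succ) = h (s j.succ) - h (s j.castSucc) := by
      intro j; simp only [rect, hh]; ring
    set Sq : ℝ := ∑ j : Fin (2 ^ m'), |h (s j.succ) - h (s j.castSucc)| ^ q with hSq
    have hSq0 : 0 ≤ Sq :=
      Finset.sum_nonneg fun j _ => Real.rpow_nonneg (abs_nonneg _) q
    have hmem : Sq ∈ pVarSet q c d h := ⟨2 ^ m', s, hs, rfl⟩
    have hSqle : Sq ≤ sSup (pVarSet q c d h) := le_csSup (hF2.1 x₁ hx₁ x₂ hx₂) hmem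
    have hV : Sq ^ (1/q) ≤ pVarNorm q c d h :=
      Real.rpow_le_rpow hSq0 hSqle (by positivity)
    have hVB : pVarNorm q c d h ≤ B :=
      le_csSup hF2.2 ⟨x₁, hx₁, x₂, hx₂, rfl⟩
    have hSB : Sq ^ (1/q) ≤ B := hV.trans hVB
    refine ⟨le_trans (Real.rpow_nonneg hSq0 _) hSB, ?_⟩
    have hsum : ∑ j : Fin (2 ^ m'),
        |rect F x₂ x₁ (s j.castSucc) (s j.succ)|
        = ∑ j : Fin (2 ^ m'), |h (s j.succ) - h (s j.castSucc)| := by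
      refine Finset.sum_congr rfl fun j _ => by rw [hrect]
    rw [hsum]
    calc ∑ j : Fin (2 ^ m'), |h (s j.succ) - h (s j.castSucc)|
        ≤ ((2 ^ m' : ℕ) : ℝ) ^ ((1:ℝ) - 1/q) * Sq ^ (1/q) :=
          holder_sum_aux q hq _ (fun j => abs_nonneg _)
      _ ≤ ((2:ℝ) ^ m') ^ ((1:ℝ) - 1/q) * B := by
          push_cast
          exact mul_le_mul_of_nonneg_left hSB (by positivity)
  have hB0 : 0 ≤ B := (main ⟨0, Nat.pow_pos two_pos⟩).1
  have hcoef : ((2:ℝ) ^ m') ^ ((1:ℝ) - 1/q) = (2:ℝ) ^ m' / D := by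
    rw [Real.rpow_sub (by positivity), Real.rpow_one, hD]
    congr 1
    rw [← Real.rpow_natCast 2 m', ← Real.rpow_mul (by norm_num), mul_one_div]
  calc ∑ i : Fin (2 ^ m), ∑ j : Fin (2 ^ m'),
        |rect F (t i.castSucc) (t i.succ) (s j.castSucc) (s j.succ)|
      ≤ ∑ _i : Fin (2 ^ m), ((2:ℝ) ^ m') ^ ((1:ℝ) - 1/q) * B :=
        Finset.sum_le_sum fun i _ => (main i).2
    _ = (2:ℝ) ^ m * (((2:ℝ) ^ m') ^ ((1:ℝ) - 1/q) * B) := by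
        rw [Finset.sum_const, Finset.card_univ, Fintype.card_fin, nsmul_eq_mul]
        push_cast; ring
    _ = (2:ℝ) ^ (m + m') * B / D := by rw [hcoef, pow_add]; ring
    _ ≤ 4 * 2 ^ (m + m') * B / D := by
        apply (div_le_div_iff_of_pos_right hDpos).mpr
        nlinarith [pow_nonneg (zero_le_two (α := ℝ)) (m + m')]
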